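/- Let h(z) = \sum_{k=0}^\infty a_k z^k and g(z) = \sum_{k=1}^\infty b_k z^k be analytic on the unit disk with |h(z)| \le 1 and |g'(z)| \le |h'(z)| for all |z| < 1. Then for all 0 \le r \le 1/5, |a_0| + \sum_{k=1}^\infty (|a_k| + |b_k|) r^k \le 1, and the radius 1/5 is sharp. -/

import Mathlib

open Metric Set Filter Finset FormalMultilinearSeries
open scoped NNReal ENNReal

noncomputable section
namespace Bohr12

/-- `f` is the sum of the power series with coefficients `c` on the unit disk. -/
def SOn (c : ℕ → ℂ) (f : ℂ → ℂ) : Prop :=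
  ∀ z : ℂ, ‖z‖ < 1 → HasSum (fun k : ℕ => c k * z ^ k) (f z)


/-- `f` is the sum of the power series with coefficients `c` on the unit disk. -/

lemma coeff_bound {c : ℕ → ℂ} {f : ℂ → ℂ} (hc : SOn c f) {s : ℝ} (h0 : 0 < s) (h1 : s < 1) :
    ∃ C : ℝ, 0 ≤ C ∧ ∀ k, ‖c k‖ * s ^ k ≤ C := by
  have hs : ‖(s : ℂ)‖ < 1 := by
    simpa [Complex.norm_real, abs_of_pos h0] using h1
  have hsum := (hc s hs).summable
  have htend := hsum.tendsto_atTop_zero.norm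
  have hbdd : BddAbove (Set.range fun k => ‖c k * (s : ℂ) ^ k‖) := htend.bddAbove_range
  obtain ⟨C, hC⟩ := hbdd
  refine ⟨C, le_trans (norm_nonneg _) (hC ⟨0, rfl⟩), fun k => ?_⟩
  have := hC ⟨k, rfl⟩
  simpa [norm_mul, norm_pow, Complex.norm_real, abs_of_pos h0] using this

lemma norm_summable {c : ℕ → ℂ} {f : ℂ → ℂ} (hc : SOn c f) {t : ℝ} (ht0 : 0 ≤ t) (ht : t < 1) :
    Summable (fun k => ‖c k‖ * t ^ k) := by
  set s : ℝ := (1 + t) / 2 with hs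
  have h0 : 0 < s := by positivity
  have h1 : s < 1 := by rw [hs]; linarith
  have hts : t < s := by rw [hs]; linarith
  obtain ⟨C, hC0, hC⟩ := coeff_bound hc h0 h1
  have hq0 : 0 ≤ t / s := by positivity
  have hq1 : t / s < 1 := (div_lt_one h0).2 hts
  refine Summable.of_nonneg_of_le (fun k => by positivity) (fun k => ?_)
    (((summable_geometric_of_lt_one hq0 hq1).mul_left C))
  have key : (t / s) ^ k * s ^ k = t ^ k := by
    rw [div_pow, div_mul_cancel₀ _ (pow_ne_zero k h0.ne')]
  have : ‖c k‖ * t ^ k = (‖c k‖ * s ^ k) * (t / s) ^ k := by rw [← key]; ring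
  rw [this]
  exact mul_le_mul_of_nonneg_right (hC k) (by positivity)

lemma mem_eball {z : ℂ} : z ∈ Metric.eball (0 : ℂ) 1 ↔ ‖z‖ < 1 := by
  simp [Metric.mem_eball, edist_zero_right, enorm_eq_nnnorm, ← ENNReal.coe_one, ENNReal.coe_lt_coe,
    ← NNReal.coe_lt_coe, coe_nnnorm]

lemma hasFPS {c : ℕ → ℂ} {f : ℂ → ℂ} (hc : SOn c f) :
    HasFPowerSeriesOnBall f (ofScalars ℂ c) 0 1 := by
  refine ⟨?_, one_pos, ?_⟩
  · refine ENNReal.le_of_forall_nnreal_lt (fun r hr => ?_)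
    have hr1 : (r : ℝ) < 1 := by exact_mod_cast hr
    have h0 : (0:ℝ) < ((r : ℝ) + 1) / 2 := by positivity
    have h1 : ((r : ℝ) + 1) / 2 < 1 := by linarith
    obtain ⟨C, hC0, hC⟩ := coeff_bound hc h0 h1
    refine (ofScalars ℂ c).le_radius_of_bound C (fun n => ?_)
    rw [ofScalars_norm]
    refine le_trans ?_ (hC n)
    have : (r : ℝ) ^ n ≤ (((r:ℝ) + 1) / 2) ^ n :=
      pow_le_pow_left₀ r.2 (by linarith : (r:ℝ) ≤ ((r:ℝ)+1)/2) n
    exact mul_le_mul_of_nonneg_left this (norm_nonneg _)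
  · intro y hy
    rw [mem_eball] at hy
    have := hc y hy
    simp only [zero_add]
    convert this using 1
    rfl
    funext n
    rw [ofScalars_apply_eq]
    simp [smul_eq_mul]

lemma SOn.unique {c c' : ℕ → ℂ} {f : ℂ → ℂ} (h : SOn c f) (h' : SOn c' f) : c = c' := by
  have := (hasFPS h).hasFPowerSeriesAt.eq_formalMultilinearSeries
    (hasFPS h').hasFPowerSeriesAt
  exact (ofScalars_series_eq_iff ℂ c c').mp this

lemma SOn.zero_coeff {c : ℕ → ℂ} {f : ℂ → ℂ} (hc : SOn c f) : f 0 = c 0 := by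
  have h := hc 0 (by norm_num)
  have h2 : HasSum (fun k : ℕ => c k * (0:ℂ) ^ k) (c 0 * (0:ℂ) ^ 0) :=
    hasSum_single 0 (by intro b hb; simp [zero_pow hb])
  have := h.unique h2
  simp at this ⊢
  exact this

lemma SOn.analyticOnNhd {c : ℕ → ℂ} {f : ℂ → ℂ} (hc : SOn c f) :
    AnalyticOnNhd ℂ f (ball 0 1) := by
  intro z hz
  refine (hasFPS hc).analyticAt_of_mem ?_
  rw [mem_eball]
  simpa using hz





lemma deriv_summable_aux {c : ℕ → ℂ} {f : ℂ → ℂ} (hc : SOn c f) {t : ℝ} (ht0 : 0 ≤ t)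
    (ht : t < 1) : Summable (fun n : ℕ => ((n : ℝ) + 1) * ‖c (n + 1)‖ * t ^ n) := by
  set s : ℝ := (1 + t) / 2 with hs
  have h0 : 0 < s := by positivity
  have h1 : s < 1 := by rw [hs]; linarith
  have hts : t < s := by rw [hs]; linarith
  obtain ⟨C, hC0, hC⟩ := coeff_bound hc h0 h1
  have hq0 : 0 ≤ t / s := by positivity
  have hq1 : t / s < 1 := (div_lt_one h0).2 hts
  have hgeom : Summable (fun n : ℕ => ((n : ℝ) + 1) * (t / s) ^ n) := by
    have h1' : Summable (fun n : ℕ => (n : ℝ) * (t / s) ^ n) := by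
      have := summable_pow_mul_geometric_of_norm_lt_one 1 (by rwa [Real.norm_eq_abs, abs_of_nonneg hq0] : ‖t / s‖ < 1)
      simpa using this
    have h2' : Summable (fun n : ℕ => (t / s) ^ n) := summable_geometric_of_lt_one hq0 hq1
    simpa [add_mul, one_mul] using h1'.add h2'
  refine Summable.of_nonneg_of_le (fun n => by positivity) (fun n => ?_)
    ((hgeom.mul_left (C / s)))
  have hterm : ((n : ℝ) + 1) * ‖c (n + 1)‖ * t ^ n
      = ((n : ℝ) + 1) * (t / s) ^ n * (‖c (n + 1)‖ * s ^ (n + 1)) / s := by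
    rw [div_pow, pow_succ]
    field_simp
  rw [hterm]
  rw [div_le_iff₀ h0]
  calc ((n : ℝ) + 1) * (t / s) ^ n * (‖c (n + 1)‖ * s ^ (n + 1))
      ≤ ((n : ℝ) + 1) * (t / s) ^ n * C := by
        refine mul_le_mul_of_nonneg_left (hC (n + 1)) (by positivity)
    _ = C / s * (((n : ℝ) + 1) * (t / s) ^ n) * s := by field_simp

lemma SOn.hasDerivAt {c : ℕ → ℂ} {f : ℂ → ℂ} (hc : SOn c f) {z : ℂ} (hz : ‖z‖ < 1) :
    HasDerivAt f (∑' n : ℕ, ((n : ℂ) + 1) * c (n + 1) * z ^ n) z := by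
  set s : ℝ := (1 + ‖z‖) / 2 with hs
  have h0 : 0 < s := by positivity
  have h1 : s < 1 := by rw [hs]; linarith
  have hzs : ‖z‖ < s := by rw [hs]; linarith
  have hu : Summable (fun n : ℕ => ((n : ℝ) + 1) * ‖c (n + 1)‖ * s ^ n) :=
    deriv_summable_aux hc h0.le h1
  have hg : ∀ (n : ℕ), ∀ y ∈ ball (0 : ℂ) s,
      HasDerivAt (fun w : ℂ => c (n + 1) * w ^ (n + 1)) (((n : ℂ) + 1) * c (n + 1) * y ^ n) y := by
    intro n y _
    have h := (hasDerivAt_pow (n + 1) y).const_mul (c (n + 1))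
    convert h using 1
    rfl
    rfl
    push_cast
    ring
  have hbound : ∀ (n : ℕ), ∀ y ∈ ball (0 : ℂ) s,
      ‖((n : ℂ) + 1) * c (n + 1) * y ^ n‖ ≤ ((n : ℝ) + 1) * ‖c (n + 1)‖ * s ^ n := by
    intro n y hy
    rw [mem_ball, dist_zero_right] at hy
    rw [norm_mul, norm_mul]
    have h1' : ‖((n : ℂ) + 1)‖ = (n : ℝ) + 1 := by
      rw [show ((n : ℂ) + 1) = ((n + 1 : ℕ) : ℂ) by push_cast; ring, Complex.norm_natCast]
      push_cast; ring
    rw [h1', norm_pow]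
    exact mul_le_mul_of_nonneg_left (pow_le_pow_left₀ (norm_nonneg _) hy.le n) (by positivity)
  have h0mem : (0 : ℂ) ∈ ball (0 : ℂ) s := by simpa using h0
  have hzmem : z ∈ ball (0 : ℂ) s := by simpa [mem_ball, dist_zero_right] using hzs
  have hsum0 : Summable (fun n => c (n + 1) * (0 : ℂ) ^ (n + 1)) := by
    simp only [zero_pow (Nat.succ_ne_zero _), mul_zero]
    exact summable_zero
  have hds := hasDerivAt_tsum_of_isPreconnected hu isOpen_ball
    (convex_ball (0 : ℂ) s).isPreconnected hg hbound h0mem hsum0 hzmem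
  have hfeq : ∀ w ∈ ball (0 : ℂ) s, f w = c 0 + ∑' n, c (n + 1) * w ^ (n + 1) := by
    intro w hw
    rw [mem_ball, dist_zero_right] at hw
    have hw1 : ‖w‖ < 1 := hw.trans h1
    have hf := hc w hw1
    have htail := (hasSum_nat_add_iff' 1).2 hf
    simp only [Finset.range_one, Finset.sum_singleton, pow_zero, mul_one] at htail
    have := htail.tsum_eq
    rw [this]
    ring
  have hF : HasDerivAt (fun w : ℂ => c 0 + ∑' n, c (n + 1) * w ^ (n + 1))
      (∑' n : ℕ, ((n : ℂ) + 1) * c (n + 1) * z ^ n) z := by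
    exact (hds.const_add (c 0))
  refine hF.congr_of_eventuallyEq ?_
  filter_upwards [isOpen_ball.mem_nhds hzmem] with w hw
  exact hfeq w hw

lemma SOn.derivSOn {c : ℕ → ℂ} {f : ℂ → ℂ} (hc : SOn c f) :
    SOn (fun k => ((k : ℂ) + 1) * c (k + 1)) (deriv f) := by
  intro z hz
  have hd := hc.hasDerivAt hz
  have hderiv : deriv f z = ∑' n : ℕ, ((n : ℂ) + 1) * c (n + 1) * z ^ n := hd.deriv
  have hsummable : Summable (fun k : ℕ => ((k : ℂ) + 1) * c (k + 1) * z ^ k) := by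
    refine Summable.of_norm ?_
    have := deriv_summable_aux hc (norm_nonneg z) hz
    refine this.congr fun n => ?_
    rw [norm_mul, norm_mul, norm_pow,
      show ((n : ℂ) + 1) = ((n + 1 : ℕ) : ℂ) by push_cast; ring, Complex.norm_natCast]
    push_cast; ring
  have := hsummable.hasSum
  rw [← hderiv] at this
  refine this.congr_fun fun k => by ring





lemma SOn.hasDerivAt_zero {c : ℕ → ℂ} {f : ℂ → ℂ} (hc : SOn c f) :
    HasDerivAt f (c 1) 0 := by
  have h := hc.hasDerivAt (z := 0) (by norm_num)
  convert h using 1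
  rw [tsum_eq_single 0 (by intro b hb; simp [zero_pow hb])]
  simp

lemma SOn.differentiableOn {c : ℕ → ℂ} {f : ℂ → ℂ} (hc : SOn c f) :
    DifferentiableOn ℂ f (ball 0 1) := by
  intro z hz
  rw [mem_ball, dist_zero_right] at hz
  exact (hc.hasDerivAt hz).differentiableAt.differentiableWithinAt

/-- The key pointwise Möbius inequality. -/
lemma mobius_norm_le {u c : ℂ} (hu : ‖u‖ ≤ 1) (hc : ‖c‖ ≤ 1) :
    ‖u - c‖ ≤ ‖1 - (starRingEnd ℂ) c * u‖ := by
  have h1 : Complex.normSq (1 - (starRingEnd ℂ) c * u) - Complex.normSq (u - c)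
      = (1 - Complex.normSq c) * (1 - Complex.normSq u) := by
    simp only [Complex.normSq_apply, Complex.sub_re, Complex.sub_im, Complex.mul_re,
      Complex.mul_im, Complex.one_re, Complex.one_im, Complex.conj_re, Complex.conj_im]
    ring
  have hc2 : Complex.normSq c ≤ 1 := by
    rw [← Complex.sq_norm]
    calc ‖c‖ ^ 2 ≤ 1 ^ 2 := by
          apply pow_le_pow_left₀ (norm_nonneg c); exact hc
      _ = 1 := one_pow 2
  have hu2 : Complex.normSq u ≤ 1 := by
    rw [← Complex.sq_norm]
    calc ‖u‖ ^ 2 ≤ 1 ^ 2 := by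
          apply pow_le_pow_left₀ (norm_nonneg u); exact hu
      _ = 1 := one_pow 2
  have h2 : Complex.normSq (u - c) ≤ Complex.normSq (1 - (starRingEnd ℂ) c * u) := by nlinarith
  rw [Complex.norm_def, Complex.norm_def]
  exact Real.sqrt_le_sqrt h2

/-- Schwarz–Pick at the origin, series form. -/
lemma schwarz_pick_zero {d : ℕ → ℂ} {F : ℂ → ℂ} (hd : SOn d F)
    (hF : ∀ z : ℂ, ‖z‖ < 1 → ‖F z‖ ≤ 1) : ‖d 1‖ ≤ 1 - ‖d 0‖ ^ 2 := by
  have hF0 : F 0 = d 0 := hd.zero_coeff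
  have hD : HasDerivAt F (d 1) 0 := hd.hasDerivAt_zero
  have hd0le : ‖d 0‖ ≤ 1 := by rw [← hF0]; exact hF 0 (by norm_num)
  rcases eq_or_lt_of_le hd0le with heq | hlt
  · -- max modulus: F is constant
    have hmax : IsMaxOn (norm ∘ F) (ball (0 : ℂ) 1) 0 := by
      intro z hz
      rw [mem_ball, dist_zero_right] at hz
      simp only [Function.comp_apply, hF0]
      calc ‖F z‖ ≤ 1 := hF z hz
        _ = ‖d 0‖ := heq.symm
      -- careful: goal is ‖F z‖ ≤ ‖F 0‖
    have hconst := Complex.eqOn_of_isPreconnected_of_isMaxOn_norm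
      (convex_ball (0 : ℂ) 1).isPreconnected isOpen_ball hd.differentiableOn
      (mem_ball_self one_pos) hmax
    have hev : F =ᶠ[nhds (0 : ℂ)] fun _ => F 0 := by
      filter_upwards [isOpen_ball.mem_nhds (mem_ball_self one_pos)] with z hz
      exact hconst hz
    have : deriv F 0 = 0 := by
      rw [Filter.EventuallyEq.deriv_eq hev]
      simp
    rw [hD.deriv] at this
    rw [this, norm_zero, heq]
    norm_num
  · -- Möbius transformation
    set c0 := d 0 with hc0def
    have hc0 : ‖c0‖ < 1 := hlt
    set χ : ℂ → ℂ := fun z => (F z - c0) / (1 - (starRingEnd ℂ) c0 * F z) with hχ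
    have hdenom : ∀ z : ℂ, ‖z‖ < 1 → 1 - (starRingEnd ℂ) c0 * F z ≠ 0 := by
      intro z hz h
      have h2 : (1 : ℂ) = (starRingEnd ℂ) c0 * F z := by
        rw [sub_eq_zero] at h; exact h
      have : (1 : ℝ) ≤ ‖c0‖ := by
        calc (1:ℝ) = ‖(starRingEnd ℂ) c0 * F z‖ := by rw [← h2]; simp
          _ = ‖c0‖ * ‖F z‖ := by rw [norm_mul, Complex.norm_conj]
          _ ≤ ‖c0‖ * 1 := by
              apply mul_le_mul_of_nonneg_left (hF z hz) (norm_nonneg _)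
          _ = ‖c0‖ := mul_one _
      linarith
    have hχ0 : χ 0 = 0 := by
      simp only [hχ, hF0, ← hc0def, sub_self, zero_div]
    have hχdiff : DifferentiableOn ℂ χ (ball 0 1) := by
      apply DifferentiableOn.div
      · exact hd.differentiableOn.sub (differentiableOn_const _)
      · exact (differentiableOn_const _).sub
          ((differentiableOn_const _).mul hd.differentiableOn)
      · intro z hz
        rw [mem_ball, dist_zero_right] at hz
        exact hdenom z hz
    have hχle : ∀ z : ℂ, ‖z‖ < 1 → ‖χ z‖ ≤ 1 := by
      intro z hz
      rw [hχ]
      simp only [norm_div]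
      rw [div_le_one_iff]
      left
      constructor
      · rw [norm_pos_iff]; exact hdenom z hz
      · exact mobius_norm_le (hF z hz) hc0.le
    -- derivative of χ at 0
    have hN : HasDerivAt (fun z => F z - c0) (d 1) 0 := hD.sub_const c0
    have hDen : HasDerivAt (fun z => 1 - (starRingEnd ℂ) c0 * F z)
        (-((starRingEnd ℂ) c0 * d 1)) 0 := by
      have := (hD.const_mul ((starRingEnd ℂ) c0)).const_sub 1
      exact this
    have hden0 : 1 - (starRingEnd ℂ) c0 * F 0 ≠ 0 := hdenom 0 (by norm_num)
    have hχD := hN.div hDen hden0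
    have hval : (d 1 * (1 - (starRingEnd ℂ) c0 * F 0) -
        (F 0 - c0) * -((starRingEnd ℂ) c0 * d 1)) / (1 - (starRingEnd ℂ) c0 * F 0) ^ 2
        = d 1 / (1 - (Complex.normSq c0 : ℂ)) := by
      rw [hF0, sub_self, zero_mul, sub_zero, ← Complex.normSq_eq_conj_mul_self]
      rw [hF0, ← Complex.normSq_eq_conj_mul_self] at hden0
      rw [sq, mul_div_assoc, div_mul_cancel_left₀ hden0, ← div_eq_mul_inv]
    rw [hval] at hχD
    -- Schwarz lemma bound
    have hschwarz : ‖deriv χ 0‖ ≤ 1 := by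
      refine le_of_forall_pos_le_add fun ε hε => ?_
      have hmaps : MapsTo χ (ball (0:ℂ) 1) (ball (χ 0) (1 + ε)) := by
        intro z hz
        rw [mem_ball, dist_zero_right] at hz
        rw [hχ0, mem_ball, dist_zero_right]
        calc ‖χ z‖ ≤ 1 := hχle z hz
          _ < 1 + ε := by linarith
      have := Complex.norm_deriv_le_div_of_mapsTo_ball hχdiff (hmaps.mono_right ball_subset_closedBall) one_pos
      calc ‖deriv χ 0‖ ≤ (1 + ε) / 1 := this
        _ = 1 + ε := by ring
    rw [(show HasDerivAt χ (d 1 / (1 - (Complex.normSq c0 : ℂ))) 0 from hχD).deriv] at hschwarz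
    have hnsq : Complex.normSq c0 < 1 := by
      rw [← Complex.sq_norm]
      calc ‖c0‖ ^ 2 ≤ ‖c0‖ * 1 := by
            rw [sq]; exact mul_le_mul_of_nonneg_left hc0.le (norm_nonneg _)
        _ = ‖c0‖ := mul_one _
        _ < 1 := hc0
    have hpos : (0:ℝ) < 1 - Complex.normSq c0 := by linarith
    rw [norm_div] at hschwarz
    have hnorm1 : ‖(1 : ℂ) - (Complex.normSq c0 : ℂ)‖ = 1 - Complex.normSq c0 := by
      rw [show (1:ℂ) - (Complex.normSq c0 : ℂ) = ((1 - Complex.normSq c0 : ℝ) : ℂ) by push_cast; ring]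
      rw [Complex.norm_real, Real.norm_eq_abs, abs_of_pos hpos]
    rw [hnorm1, div_le_one hpos] at hschwarz
    calc ‖d 1‖ ≤ 1 - Complex.normSq c0 := hschwarz
      _ = 1 - ‖d 0‖ ^ 2 := by rw [← hc0def, ← Complex.sq_norm]





lemma coeff_le {c : ℕ → ℂ} {F : ℂ → ℂ} (hc : SOn c F)
    (hF : ∀ z : ℂ, ‖z‖ < 1 → ‖F z‖ ≤ 1) {k : ℕ} (hk : 1 ≤ k) :
    ‖c k‖ ≤ 1 - ‖c 0‖ ^ 2 := by
  have hkpos : 0 < k := hk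
  have hkne : k ≠ 0 := hkpos.ne'
  have hk0 : (k : ℂ) ≠ 0 := Nat.cast_ne_zero.mpr hkne
  set ζ : ℂ := Complex.exp (2 * Real.pi * Complex.I / k) with hζdef
  have hζnorm : ‖ζ‖ = 1 := by
    rw [hζdef, Complex.norm_exp]
    have : (2 * Real.pi * Complex.I / k).re = 0 := by
      rw [show (2 * Real.pi * Complex.I / k) = ((2 * Real.pi / k : ℝ) : ℂ) * Complex.I by
        push_cast; ring]
      simp
    rw [this, Real.exp_zero]
  have hζk : ζ ^ k = 1 := by
    rw [hζdef, ← Complex.exp_nat_mul]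
    rw [show (k : ℂ) * (2 * Real.pi * Complex.I / k) = 2 * Real.pi * Complex.I by
      field_simp]
    exact Complex.exp_two_pi_mul_I
  have hpi : (2 * (Real.pi : ℂ) * Complex.I) ≠ 0 := by
    simp [Real.pi_ne_zero, Complex.I_ne_zero, Complex.ofReal_ne_zero]
  have hζm : ∀ m : ℕ, ¬ (k ∣ m) → ζ ^ m ≠ 1 := by
    intro m hm h1
    rw [hζdef, ← Complex.exp_nat_mul, Complex.exp_eq_one_iff] at h1
    obtain ⟨n, hn⟩ := h1
    have h2 : (m : ℂ) * (2 * Real.pi * Complex.I) = (n : ℂ) * (2 * Real.pi * Complex.I) * k := by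
      have := congrArg (fun x : ℂ => x * (k : ℂ)) hn
      rw [show (m : ℂ) * (2 * Real.pi * Complex.I / k) * k
        = (m : ℂ) * (2 * Real.pi * Complex.I) * ((k : ℂ) / k) by ring,
        div_self hk0, mul_one] at this
      exact this
    have h5 : (m : ℂ) * (2 * Real.pi * Complex.I) = ((n * k : ℤ) : ℂ) * (2 * Real.pi * Complex.I) := by
      rw [h2]; push_cast; ring
    have h6 : (m : ℂ) = ((n * k : ℤ) : ℂ) := mul_right_cancel₀ hpi h5
    have h7 : (m : ℤ) = n * k := by exact_mod_cast h6
    exact hm (Int.natCast_dvd_natCast.mp ⟨n, by rw [h7]; ring⟩)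
  have hrot : ∀ m : ℕ, (∑ j ∈ range k, (ζ ^ m) ^ j) = if k ∣ m then (k : ℂ) else 0 := by
    intro m
    by_cases hdvd : k ∣ m
    · rw [if_pos hdvd]
      obtain ⟨t, rfl⟩ := hdvd
      rw [pow_mul, hζk, one_pow]
      simp
    · rw [if_neg hdvd, geom_sum_eq (hζm m hdvd), ← pow_mul, mul_comm m k, pow_mul, hζk,
        one_pow, sub_self, zero_div]
  set A : ℂ → ℂ := fun z => (k : ℂ)⁻¹ * ∑ j ∈ range k, F (ζ ^ j * z) with hAdef
  have hζjnorm : ∀ (j : ℕ) (z : ℂ), ‖ζ ^ j * z‖ = ‖z‖ := by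
    intro j z
    rw [norm_mul, norm_pow, hζnorm, one_pow, one_mul]
  have hAsum : ∀ z : ℂ, ‖z‖ < 1 →
      HasSum (fun m : ℕ => if k ∣ m then c m * z ^ m else 0) (A z) := by
    intro z hz
    have hterm : ∀ j ∈ range k, HasSum (fun m : ℕ => c m * (ζ ^ j * z) ^ m) (F (ζ ^ j * z)) :=
      fun j _ => hc (ζ ^ j * z) (by rw [hζjnorm]; exact hz)
    have hsum := hasSum_sum (f := fun j (m : ℕ) => c m * (ζ ^ j * z) ^ m)
      (a := fun j => F (ζ ^ j * z)) (s := range k) hterm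
    have hmul := hsum.mul_left (k : ℂ)⁻¹
    have heq : ∀ m : ℕ, (k : ℂ)⁻¹ * ∑ j ∈ range k, c m * (ζ ^ j * z) ^ m
        = (if k ∣ m then c m * z ^ m else 0) := by
      intro m
      have hstep : ∀ j ∈ range k, c m * (ζ ^ j * z) ^ m = (ζ ^ m) ^ j * (c m * z ^ m) := by
        intro j _
        rw [mul_pow, pow_right_comm]
        ring
      rw [Finset.sum_congr rfl hstep, ← Finset.sum_mul, hrot m]
      by_cases hdvd : k ∣ m
      · rw [if_pos hdvd, if_pos hdvd, ← mul_assoc, inv_mul_cancel₀ hk0, one_mul]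
      · rw [if_neg hdvd, if_neg hdvd, zero_mul, mul_zero]
    convert hmul using 1
    rfl
    funext m
    exact (heq m).symm
  have hAmul : ∀ z : ℂ, ‖z‖ < 1 →
      HasSum (fun j : ℕ => c (k * j) * z ^ (k * j)) (A z) := by
    intro z hz
    have hinj : Function.Injective (fun j : ℕ => k * j) :=
      fun a b hab => Nat.eq_of_mul_eq_mul_left hkpos hab
    have h := (Function.Injective.hasSum_iff hinj (f := fun m : ℕ => if k ∣ m then c m * z ^ m else 0)
        (a := A z) (fun m hm => by
          rw [if_neg]
          rintro ⟨t, ht⟩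
          exact hm ⟨t, ht.symm⟩)).mpr (hAsum z hz)
    refine h.congr_fun fun j => ?_
    simp only [Function.comp_apply]
    rw [if_pos ⟨j, rfl⟩]
  -- the compressed function ψ
  set ψ : ℂ → ℂ := fun w => A (w ^ ((k : ℂ)⁻¹)) with hψdef
  have hroot : ∀ w : ℂ, ‖w‖ < 1 → ‖w ^ ((k : ℂ)⁻¹)‖ < 1 ∧ (w ^ ((k : ℂ)⁻¹)) ^ k = w := by
    intro w hw
    refine ⟨?_, Complex.cpow_nat_inv_pow w hkne⟩
    by_cases hw0 : w = 0
    · rw [hw0, Complex.zero_cpow (by simpa using hk0)]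
      simpa using one_pos
    · have hre : ((k : ℂ)⁻¹).re = (k : ℝ)⁻¹ := by
        rw [show ((k : ℂ)⁻¹) = (((k : ℝ)⁻¹ : ℝ) : ℂ) by push_cast; ring]
        simp
      have him : ((k : ℂ)⁻¹).im = 0 := by
        rw [show ((k : ℂ)⁻¹) = (((k : ℝ)⁻¹ : ℝ) : ℂ) by push_cast; ring]
        simp
      rw [Complex.norm_cpow_of_ne_zero hw0, hre, him, mul_zero,
        Real.exp_zero, div_one]
      refine Real.rpow_lt_one (norm_nonneg w) ?_ (by positivity)
      exact hw
  have hψ : SOn (fun j => c (k * j)) ψ := by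
    intro w hw
    obtain ⟨hn, hpow⟩ := hroot w hw
    have h := hAmul _ hn
    refine h.congr_fun fun j => ?_
    rw [pow_mul, hpow]
  have hψF : ∀ w : ℂ, ‖w‖ < 1 → ‖ψ w‖ ≤ 1 := by
    intro w hw
    obtain ⟨hn, _⟩ := hroot w hw
    rw [hψdef]
    simp only
    rw [norm_mul, norm_inv, Complex.norm_natCast]
    calc (k : ℝ)⁻¹ * ‖∑ j ∈ range k, F (ζ ^ j * w ^ ((k:ℂ)⁻¹))‖
        ≤ (k : ℝ)⁻¹ * ∑ j ∈ range k, ‖F (ζ ^ j * w ^ ((k:ℂ)⁻¹))‖ := by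
          refine mul_le_mul_of_nonneg_left (norm_sum_le _ _) (by positivity)
      _ ≤ (k : ℝ)⁻¹ * ∑ _j ∈ range k, (1 : ℝ) := by
          refine mul_le_mul_of_nonneg_left ?_ (by positivity)
          refine Finset.sum_le_sum fun j _ => hF _ ?_
          rw [hζjnorm]
          exact hn
      _ = 1 := by
          rw [Finset.sum_const, card_range, nsmul_eq_mul, mul_one,
            inv_mul_cancel₀ (by exact_mod_cast hkne : (k:ℝ) ≠ 0)]
  have hfinal := schwarz_pick_zero hψ hψF
  simpa [mul_one, mul_zero] using hfinal



/-- Division of analytic functions dominated in modulus. -/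
lemma exists_omega {p q : ℂ → ℂ}
    (hp : AnalyticOnNhd ℂ p (ball (0:ℂ) 1)) (hq : AnalyticOnNhd ℂ q (ball (0:ℂ) 1))
    (hle : ∀ z ∈ ball (0:ℂ) 1, ‖p z‖ ≤ ‖q z‖)
    (hz₀ : ∃ z₀ ∈ ball (0:ℂ) 1, q z₀ ≠ 0) :
    ∃ ω : ℂ → ℂ, AnalyticOnNhd ℂ ω (ball (0:ℂ) 1) ∧
      (∀ z ∈ ball (0:ℂ) 1, ‖ω z‖ ≤ 1) ∧
      (∀ z ∈ ball (0:ℂ) 1, p z = ω z * q z) := by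
  obtain ⟨z₀, hmem0, hz₀ne⟩ := hz₀
  set D := ball (0:ℂ) 1 with hD
  have hDopen : IsOpen D := isOpen_ball
  have hDconn : IsPreconnected D := (convex_ball (0:ℂ) 1).isPreconnected
  set ω : ℂ → ℂ := fun z => limUnder (nhdsWithin z {z}ᶜ) (fun w => p w / q w) with hω
  -- key local structure
  have key : ∀ z ∈ D, AnalyticAt ℂ ω z ∧
      Tendsto (fun w => p w / q w) (nhdsWithin z {z}ᶜ) (nhds (ω z)) := by
    intro z hzD
    have hqa : AnalyticAt ℂ q z := hq z hzD
    have hpa : AnalyticAt ℂ p z := hp z hzD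
    -- q does not vanish identically near z
    have horder : analyticOrderAt q z ≠ ⊤ := by
      intro htop
      rw [analyticOrderAt_eq_top] at htop
      have : EqOn q 0 D :=
        hq.eqOn_zero_of_preconnected_of_eventuallyEq_zero hDconn hzD htop
      exact hz₀ne (this hmem0)
    set n := (analyticOrderAt q z).toNat with hn
    have horder' : analyticOrderAt q z = (n : ℕ∞) := by
      rw [hn]
      exact (ENat.natCast_toNat horder).symm
    obtain ⟨u, hu_an, hu0, hqu⟩ := hqa.analyticOrderAt_eq_natCast.mp horder'
    -- factor p as (w - z)^n • v
    have pfac : ∃ v : ℂ → ℂ, AnalyticAt ℂ v z ∧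
        ∀ᶠ w in nhds z, p w = (w - z) ^ n • v w := by
      by_cases hptop : analyticOrderAt p z = ⊤
      · refine ⟨0, analyticAt_const, ?_⟩
        filter_upwards [analyticOrderAt_eq_top.mp hptop] with w hw
        simp [hw]
      · set m := (analyticOrderAt p z).toNat with hm
        have hm' : analyticOrderAt p z = (m : ℕ∞) := (ENat.natCast_toNat hptop).symm
        obtain ⟨v₀, hv₀_an, hv₀0, hpv⟩ := hpa.analyticOrderAt_eq_natCast.mp hm'
        have hnm : n ≤ m := by
          by_contra hlt
          push_neg at hlt
          -- derive contradiction: ‖v₀ z‖ ≤ 0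
          have hev : ∀ᶠ w in nhdsWithin z {z}ᶜ,
              ‖v₀ w‖ ≤ ‖w - z‖ ^ (n - m) * ‖u w‖ := by
            have h1 : ∀ᶠ w in nhds z, p w = (w - z) ^ m • v₀ w := hpv
            have h2 : ∀ᶠ w in nhds z, q w = (w - z) ^ n • u w := hqu
            have h3 : ∀ᶠ w in nhds z, w ∈ D := hDopen.mem_nhds hzD
            filter_upwards [mem_nhdsWithin_of_mem_nhds (h1.and (h2.and h3)),
              self_mem_nhdsWithin] with w hw hwne
            obtain ⟨e1, e2, e3⟩ := hw
            have hwz : w - z ≠ 0 := sub_ne_zero.mpr hwne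
            have hple : ‖p w‖ ≤ ‖q w‖ := hle w e3
            rw [e1, e2] at hple
            rw [smul_eq_mul, smul_eq_mul, norm_mul, norm_mul, norm_pow, norm_pow] at hple
            have hwzpos : 0 < ‖w - z‖ := norm_pos_iff.mpr hwz
            have hmn : m < n := hlt
            -- ‖w-z‖^m * ‖v₀ w‖ ≤ ‖w-z‖^n * ‖u w‖
            have := hple
            rw [show n = m + (n - m) by omega, pow_add] at this
            have h4 : ‖v₀ w‖ ≤ ‖w - z‖ ^ (n - m) * ‖u w‖ := by
              have hpow : (0:ℝ) < ‖w - z‖ ^ m := pow_pos hwzpos m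
              nlinarith [pow_pos hwzpos m]
            exact h4
          have htend : Tendsto (fun w => ‖w - z‖ ^ (n - m) * ‖u w‖)
              (nhdsWithin z {z}ᶜ) (nhds 0) := by
            have h5 : Tendsto (fun w : ℂ => ‖w - z‖ ^ (n - m)) (nhds z) (nhds 0) := by
              have hnm1 : 1 ≤ n - m := by omega
              have : Tendsto (fun w : ℂ => w - z) (nhds z) (nhds 0) := by
                have h := ((continuous_id.sub (continuous_const (y := z))).tendsto z)
                simpa [Pi.sub_def] using h
              have h6 := (this.norm.pow (n - m))
              simpa [zero_pow (by omega : n - m ≠ 0)] using h6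
            have h7 : Tendsto (fun w => ‖u w‖) (nhds z) (nhds ‖u z‖) :=
              hu_an.continuousAt.norm
            have := h5.mul h7
            rw [zero_mul] at this
            exact this.mono_left nhdsWithin_le_nhds
          have htendv : Tendsto (fun w => ‖v₀ w‖) (nhdsWithin z {z}ᶜ) (nhds ‖v₀ z‖) :=
            hv₀_an.continuousAt.norm.mono_left nhdsWithin_le_nhds
          have : ‖v₀ z‖ ≤ 0 := le_of_tendsto_of_tendsto htendv htend hev
          exact hv₀0 (norm_le_zero_iff.mp this)
        refine ⟨fun w => (w - z) ^ (m - n) * v₀ w, ?_, ?_⟩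
        · exact (((analyticAt_id.sub analyticAt_const).pow _).mul hv₀_an)
        · filter_upwards [hpv] with w hw
          rw [hw, smul_eq_mul, smul_eq_mul, ← mul_assoc, ← pow_add,
            show n + (m - n) = m by omega]
    obtain ⟨v, hv_an, hpv⟩ := pfac
    -- gather eventual facts into an open set U
    have hev : ∀ᶠ w in nhds z, q w = (w - z) ^ n • u w ∧ p w = (w - z) ^ n • v w ∧
        u w ≠ 0 ∧ AnalyticAt ℂ u w ∧ AnalyticAt ℂ v w := by
      have e3 := hu_an.continuousAt.eventually_ne hu0
      have e4 := hu_an.eventually_analyticAt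
      have e5 := hv_an.eventually_analyticAt
      exact hqu.and (hpv.and (e3.and (e4.and e5)))
    obtain ⟨U, hUsub, hUopen, hzU⟩ := _root_.eventually_nhds_iff.mp hev
    -- on U \ {z}, p / q = v / u
    have hquot : ∀ w ∈ U, w ≠ z → p w / q w = v w / u w := by
      intro w hwU hwne
      obtain ⟨e1, e2, e3, _, _⟩ := hUsub w hwU
      have hwz : (w - z) ^ n ≠ 0 := pow_ne_zero _ (sub_ne_zero.mpr hwne)
      rw [e1, e2, smul_eq_mul, smul_eq_mul, mul_div_mul_left _ _ hwz]
    -- ω = v / u on U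
    have homega : ∀ w ∈ U, ω w = v w / u w ∧
        Tendsto (fun x => p x / q x) (nhdsWithin w {w}ᶜ) (nhds (v w / u w)) := by
      intro w hwU
      obtain ⟨_, _, e3, e4, e5⟩ := hUsub w hwU
      have hcont : Tendsto (fun x => v x / u x) (nhds w) (nhds (v w / u w)) :=
        (e5.continuousAt.div e4.continuousAt e3)
      have hUdiff : U \ {z} ∪ {w} ∈ nhdsWithin w {w}ᶜ ∨ True := Or.inr trivial
      have heq : (fun x => p x / q x) =ᶠ[nhdsWithin w {w}ᶜ] (fun x => v x / u x) := by
        by_cases hwz : w = z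
        · subst hwz
          have : U ∈ nhds w := hUopen.mem_nhds hwU
          filter_upwards [mem_nhdsWithin_of_mem_nhds this, self_mem_nhdsWithin] with x hx hxne
          exact hquot x hx hxne
        · have hUz : U \ {z} ∈ nhds w := by
            refine (hUopen.sdiff isClosed_singleton).mem_nhds ?_
            exact ⟨hwU, hwz⟩
          filter_upwards [mem_nhdsWithin_of_mem_nhds hUz] with x hx
          rcases eq_or_ne x z with rfl | hxz
          · exact absurd rfl hx.2
          · exact hquot x hx.1 hxz
      have htendw : Tendsto (fun x => p x / q x) (nhdsWithin w {w}ᶜ) (nhds (v w / u w)) :=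
        Tendsto.congr' heq.symm (hcont.mono_left nhdsWithin_le_nhds)
      exact ⟨htendw.limUnder_eq, htendw⟩
    obtain ⟨hωz, htendz⟩ := homega z hzU
    constructor
    · -- analyticity via congruence on U
      have hdiv : AnalyticAt ℂ (fun w => v w / u w) z := hv_an.div hu_an hu0
      refine hdiv.congr ?_
      filter_upwards [hUopen.mem_nhds hzU] with w hw
      exact ((homega w hw).1).symm
    · rw [hωz]
      exact htendz
  refine ⟨ω, fun z hz => (key z hz).1, ?_, ?_⟩
  · -- bound
    intro z hzD
    have htend := (key z hzD).2
    have hev : ∀ᶠ w in nhdsWithin z {z}ᶜ, ‖p w / q w‖ ≤ 1 := by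
      filter_upwards [mem_nhdsWithin_of_mem_nhds (hDopen.mem_nhds hzD)] with w hw
      by_cases hqw : q w = 0
      · have : ‖p w‖ ≤ 0 := by simpa [hqw] using hle w hw
        simp [hqw, norm_le_zero_iff.mp this]
      · rw [norm_div, div_le_one (norm_pos_iff.mpr hqw)]
        exact hle w hw
    exact le_of_tendsto htend.norm hev
  · -- factorization
    intro z hzD
    by_cases hqz : q z = 0
    · have : ‖p z‖ ≤ 0 := by simpa [hqz] using hle z hzD
      rw [norm_le_zero_iff.mp this, hqz, mul_zero]
    · have htend := (key z hzD).2
      have hcont : Tendsto (fun w => p w / q w) (nhdsWithin z {z}ᶜ) (nhds (p z / q z)) :=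
        (((hp z hzD).continuousAt.div (hq z hzD).continuousAt hqz)).mono_left nhdsWithin_le_nhds
      have : ω z = p z / q z := tendsto_nhds_unique htend hcont
      rw [this, div_mul_cancel₀ _ hqz]





/-- An analytic function on the unit ball is a power series sum there. -/
lemma analytic_to_SOn {f : ℂ → ℂ} (hf : AnalyticOnNhd ℂ f (ball (0:ℂ) 1)) :
    ∃ c : ℕ → ℂ, SOn c f := by
  have hdiff : DifferentiableOn ℂ f (ball (0:ℂ) 1) := fun z hz =>
    (hf z hz).differentiableAt.differentiableWithinAt
  have hhalf : DifferentiableOn ℂ f (closedBall (0:ℂ) ((1/2 : ℝ≥0) : ℝ)) := by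
    refine hdiff.mono ?_
    intro x hx
    rw [mem_closedBall] at hx
    rw [mem_ball]
    calc dist x 0 ≤ (1/2 : ℝ) := by simpa using hx
      _ < 1 := by norm_num
  have h2 := hhalf.hasFPowerSeriesOnBall (by norm_num : (0:ℝ≥0) < 1/2)
  refine ⟨fun n => (cauchyPowerSeries f 0 ((1/2 : ℝ≥0) : ℝ)).coeff n, ?_⟩
  intro z hz
  set s : ℝ := (1 + ‖z‖) / 2 with hs
  have hs0 : 0 < s := by positivity
  have hs1 : s < 1 := by rw [hs]; linarith
  have hzs : ‖z‖ < s := by rw [hs]; linarith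
  set R : ℝ≥0 := s.toNNReal with hR
  have hRs : (R : ℝ) = s := Real.coe_toNNReal s hs0.le
  have hRpos : (0:ℝ≥0) < R := by
    rw [← NNReal.coe_lt_coe, hRs]; exact hs0
  have hRdiff : DifferentiableOn ℂ f (closedBall (0:ℂ) (R : ℝ)) := by
    refine hdiff.mono ?_
    intro x hx
    rw [mem_closedBall] at hx
    rw [mem_ball]
    calc dist x 0 ≤ (R:ℝ) := hx
      _ < 1 := by rw [hRs]; exact hs1
  have h1 := hRdiff.hasFPowerSeriesOnBall hRpos
  have heq : cauchyPowerSeries f 0 ((R:ℝ)) = cauchyPowerSeries f 0 ((1/2 : ℝ≥0) : ℝ) :=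
    h1.hasFPowerSeriesAt.eq_formalMultilinearSeries h2.hasFPowerSeriesAt
  have hmem : z ∈ Metric.eball (0:ℂ) ((R : ℝ≥0) : ℝ≥0∞) := by
    rw [Metric.mem_eball, edist_zero_right, enorm_eq_nnnorm, ENNReal.coe_lt_coe, ← NNReal.coe_lt_coe,
      coe_nnnorm, hRs]
    exact hzs
  have hsum := h1.hasSum hmem
  rw [zero_add] at hsum
  refine hsum.congr_fun fun n => ?_
  rw [FormalMultilinearSeries.apply_eq_pow_smul_coeff, smul_eq_mul, heq, mul_comm]





lemma mem_ball01 {z : ℂ} : z ∈ ball (0:ℂ) 1 ↔ ‖z‖ < 1 := by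
  rw [mem_ball, dist_zero_right]

lemma shift_summable {c : ℕ → ℂ} {f : ℂ → ℂ} (hc : SOn c f) {r : ℝ} (h0 : 0 ≤ r) (h1 : r < 1) :
    Summable (fun k : ℕ => ‖c (k + 1)‖ * r ^ (k + 1)) :=
  (summable_nat_add_iff 1).mpr (norm_summable hc h0 h1)

lemma geom_tail {r : ℝ} (h0 : 0 ≤ r) (h1 : r < 1) : ∑' k : ℕ, r ^ (k + 1) = r / (1 - r) := by
  calc ∑' k : ℕ, r ^ (k + 1) = ∑' k : ℕ, r * r ^ k := by
        refine tsum_congr fun k => ?_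
        rw [pow_succ]; ring
    _ = r * ∑' k : ℕ, r ^ k := tsum_mul_left
    _ = r * (1 - r)⁻¹ := by rw [tsum_geometric_of_lt_one h0 h1]
    _ = r / (1 - r) := by rw [div_eq_mul_inv]

lemma tail_le {c : ℕ → ℂ} {f : ℂ → ℂ} (hc : SOn c f) (hF : ∀ z : ℂ, ‖z‖ < 1 → ‖f z‖ ≤ 1)
    {r : ℝ} (h0 : 0 ≤ r) (h1 : r < 1) :
    ∑' k : ℕ, ‖c (k + 1)‖ * r ^ (k + 1) ≤ (1 - ‖c 0‖ ^ 2) * (r / (1 - r)) := by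
  have hsum := shift_summable hc h0 h1
  have hg : Summable (fun k : ℕ => r ^ (k + 1)) :=
    (summable_nat_add_iff 1).mpr (summable_geometric_of_lt_one h0 h1)
  have hgeo : Summable (fun k : ℕ => (1 - ‖c 0‖ ^ 2) * r ^ (k + 1)) := hg.mul_left _
  calc ∑' k : ℕ, ‖c (k + 1)‖ * r ^ (k + 1)
      ≤ ∑' k : ℕ, (1 - ‖c 0‖ ^ 2) * r ^ (k + 1) := by
        refine Summable.tsum_le_tsum (fun k => ?_) hsum hgeo
        exact mul_le_mul_of_nonneg_right (coeff_le hc hF (Nat.succ_le_succ (Nat.zero_le k)))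
          (pow_nonneg h0 _)
    _ = (1 - ‖c 0‖ ^ 2) * (r / (1 - r)) := by rw [tsum_mul_left, geom_tail h0 h1]

lemma natnorm (n : ℕ) : ‖((n : ℂ) + 1)‖ = (n : ℝ) + 1 := by
  rw [show ((n : ℂ) + 1) = ((n + 1 : ℕ) : ℂ) by push_cast; ring, Complex.norm_natCast]
  push_cast; ring

set_option maxHeartbeats 1000000 in
theorem part1 (h g : ℂ → ℂ) (a b : ℕ → ℂ)
    (ha : SOn a h) (hb : SOn b g) (hb0 : b 0 = 0)
    (hh1 : ∀ z : ℂ, ‖z‖ < 1 → ‖h z‖ ≤ 1)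
    (hd : ∀ z : ℂ, ‖z‖ < 1 → ‖deriv g z‖ ≤ ‖deriv h z‖)
    (r : ℝ) (hr0 : 0 ≤ r) (hr5 : r ≤ 1 / 5) :
    ‖a 0‖ + ∑' k : ℕ, (‖a (k + 1)‖ + ‖b (k + 1)‖) * r ^ (k + 1) ≤ 1 := by
  have hr1 : r < 1 := lt_of_le_of_lt hr5 (by norm_num)
  have hα1 : ‖a 0‖ ≤ 1 := by rw [← ha.zero_coeff]; exact hh1 0 (by norm_num)
  have hα0 : (0:ℝ) ≤ ‖a 0‖ := norm_nonneg _
  have hsa := shift_summable ha hr0 hr1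
  have hsb := shift_summable hb hr0 hr1
  have hA := tail_le ha hh1 hr0 hr1
  have hAnn : (0:ℝ) ≤ ∑' k : ℕ, ‖a (k + 1)‖ * r ^ (k + 1) :=
    tsum_nonneg fun k => by positivity
  have ha' : SOn (fun k => ((k : ℂ) + 1) * a (k + 1)) (deriv h) := ha.derivSOn
  have hb' : SOn (fun k => ((k : ℂ) + 1) * b (k + 1)) (deriv g) := hb.derivSOn
  have ht4 : r / (1 - r) ≤ 1 / 4 := by
    rw [div_le_div_iff₀ (by linarith) (by norm_num)]
    linarith
  have htnn : 0 ≤ r / (1 - r) := div_nonneg hr0 (by linarith)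
  -- KEY: tail of b dominated by tail of a
  have hBA : ∑' k : ℕ, ‖b (k + 1)‖ * r ^ (k + 1) ≤ ∑' k : ℕ, ‖a (k + 1)‖ * r ^ (k + 1) := by
    by_cases hcase : ∀ z ∈ ball (0:ℂ) 1, deriv h z = 0
    · have hzero : ∀ z : ℂ, ‖z‖ < 1 → deriv g z = 0 := by
        intro z hz
        have h2 := hd z hz
        rw [hcase z (mem_ball01.mpr hz), norm_zero] at h2
        exact norm_le_zero_iff.mp h2
      have hz2 : SOn (fun _ => (0:ℂ)) (deriv g) := by
        intro z hz
        rw [hzero z hz]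
        have h0 : HasSum (fun _ : ℕ => (0 : ℂ)) 0 := hasSum_zero
        exact h0.congr_fun fun k => by rw [zero_mul]
      have hcoe := hb'.unique hz2
      have hbz : ∀ k : ℕ, b (k + 1) = 0 := by
        intro k
        have hk := congrFun hcoe k
        rcases mul_eq_zero.mp hk with h' | h'
        · exact absurd h' (Nat.cast_add_one_ne_zero k)
        · exact h'
      calc ∑' k : ℕ, ‖b (k + 1)‖ * r ^ (k + 1) = 0 := by
            simp [hbz]
        _ ≤ _ := hAnn
    · push_neg at hcase
      obtain ⟨z₀, hz₀mem, hz₀⟩ := hcase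
      have hAh : AnalyticOnNhd ℂ (deriv h) (ball 0 1) := ha'.analyticOnNhd
      have hAg : AnalyticOnNhd ℂ (deriv g) (ball 0 1) := hb'.analyticOnNhd
      have hle' : ∀ z ∈ ball (0:ℂ) 1, ‖deriv g z‖ ≤ ‖deriv h z‖ := fun z hz =>
        hd z (mem_ball01.mp hz)
      obtain ⟨ω, hωan, hωle, hωfac⟩ := exists_omega hAg hAh hle' ⟨z₀, hz₀mem, hz₀⟩
      obtain ⟨w, hw⟩ := analytic_to_SOn hωan
      have hwbd : ∀ z : ℂ, ‖z‖ < 1 → ‖ω z‖ ≤ 1 := fun z hz => hωle z (mem_ball01.mpr hz)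
      -- Cauchy product gives the coefficients of deriv g
      have hsd : SOn (fun n => ∑ k ∈ range (n + 1),
          w k * ((((n - k : ℕ) : ℂ)) + 1) * a ((n - k) + 1)) (deriv g) := by
        intro z hz
        have h1 := hw z hz
        have h2 := ha' z hz
        have hn1 : Summable (fun k : ℕ => ‖w k * z ^ k‖) := by
          refine (norm_summable hw (norm_nonneg z) hz).congr fun k => ?_
          rw [norm_mul, norm_pow]
        have hn2 : Summable (fun k : ℕ => ‖((k : ℂ) + 1) * a (k + 1) * z ^ k‖) := by
          refine ((norm_summable ha' (norm_nonneg z) hz).congr fun k => ?_)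
          rw [norm_mul (((k : ℂ) + 1) * a (k + 1)) (z ^ k), norm_pow]
        have hprod := hasSum_sum_range_mul_of_summable_norm hn1 hn2
        rw [h1.tsum_eq, h2.tsum_eq, ← hωfac z (mem_ball01.mpr hz)] at hprod
        refine hprod.congr_fun fun n => ?_
        rw [Finset.sum_mul]
        refine Finset.sum_congr rfl fun k hk => ?_
        rw [Finset.mem_range] at hk
        have hkn : k ≤ n := Nat.lt_succ_iff.mp hk
        have hz' : z ^ n = z ^ k * z ^ (n - k) := by
          rw [← pow_add]
          congr 1
          omega
        rw [hz']
        ring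
      have hcoeff := hb'.unique hsd
      have hWsum : Summable (fun k : ℕ => ‖w k‖ * r ^ k) := norm_summable hw hr0 hr1
      have hfg : Summable (fun x : ℕ × ℕ =>
          (‖w x.1‖ * r ^ x.1) * (‖a (x.2 + 1)‖ * r ^ (x.2 + 1))) :=
        hWsum.mul_of_nonneg hsa (fun k => by positivity) (fun k => by positivity)
      have hRHS : Summable (fun n => ∑ k ∈ range (n + 1),
          (‖w k‖ * r ^ k) * (‖a ((n - k) + 1)‖ * r ^ ((n - k) + 1))) :=
        summable_sum_mul_range_of_summable_mul
          (f := fun k => ‖w k‖ * r ^ k) (g := fun m => ‖a (m + 1)‖ * r ^ (m + 1)) hfg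
      have hterm : ∀ n : ℕ, ‖b (n + 1)‖ * r ^ (n + 1) ≤ ∑ k ∈ range (n + 1),
          (‖w k‖ * r ^ k) * (‖a ((n - k) + 1)‖ * r ^ ((n - k) + 1)) := by
        intro n
        have hid : ((n : ℂ) + 1) * b (n + 1) = ∑ k ∈ range (n + 1),
            w k * ((((n - k : ℕ) : ℂ)) + 1) * a ((n - k) + 1) := congrFun hcoeff n
        have hnpos : (0:ℝ) < (n : ℝ) + 1 := by positivity
        refine le_of_mul_le_mul_left ?_ hnpos
        calc ((n : ℝ) + 1) * (‖b (n + 1)‖ * r ^ (n + 1))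
            = ‖((n : ℂ) + 1) * b (n + 1)‖ * r ^ (n + 1) := by
              rw [norm_mul, natnorm]; ring
          _ = ‖∑ k ∈ range (n + 1), w k * ((((n - k : ℕ) : ℂ)) + 1) * a ((n - k) + 1)‖
              * r ^ (n + 1) := by rw [hid]
          _ ≤ (∑ k ∈ range (n + 1), ‖w k‖ * (((n - k : ℕ) : ℝ) + 1) * ‖a ((n - k) + 1)‖)
              * r ^ (n + 1) := by
              refine mul_le_mul_of_nonneg_right ?_ (by positivity)
              refine (norm_sum_le _ _).trans ?_
              refine le_of_eq (Finset.sum_congr rfl fun k _ => ?_)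
              rw [norm_mul, norm_mul, natnorm]
          _ = ∑ k ∈ range (n + 1), ‖w k‖ * (((n - k : ℕ) : ℝ) + 1) * ‖a ((n - k) + 1)‖
              * r ^ (n + 1) := by rw [Finset.sum_mul]
          _ ≤ ∑ k ∈ range (n + 1), ((n : ℝ) + 1) *
              ((‖w k‖ * r ^ k) * (‖a ((n - k) + 1)‖ * r ^ ((n - k) + 1))) := by
              refine Finset.sum_le_sum fun k hk => ?_
              rw [Finset.mem_range] at hk
              have hkn : k ≤ n := Nat.lt_succ_iff.mp hk
              have hrpow : r ^ (n + 1) = r ^ k * r ^ ((n - k) + 1) := by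
                rw [← pow_add]
                congr 1
                omega
              have hcast : ((n - k : ℕ) : ℝ) ≤ (n : ℝ) := Nat.cast_le.mpr (Nat.sub_le n k)
              have hX : (0:ℝ) ≤ (‖w k‖ * r ^ k) * (‖a ((n - k) + 1)‖ * r ^ ((n - k) + 1)) := by
                positivity
              calc ‖w k‖ * (((n - k : ℕ) : ℝ) + 1) * ‖a ((n - k) + 1)‖ * r ^ (n + 1)
                  = (((n - k : ℕ) : ℝ) + 1) *
                    ((‖w k‖ * r ^ k) * (‖a ((n - k) + 1)‖ * r ^ ((n - k) + 1))) := by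
                    rw [hrpow]; ring
                _ ≤ ((n : ℝ) + 1) *
                    ((‖w k‖ * r ^ k) * (‖a ((n - k) + 1)‖ * r ^ ((n - k) + 1))) := by
                    exact mul_le_mul_of_nonneg_right (by linarith) hX
          _ = ((n : ℝ) + 1) * ∑ k ∈ range (n + 1),
              (‖w k‖ * r ^ k) * (‖a ((n - k) + 1)‖ * r ^ ((n - k) + 1)) := by
              rw [Finset.mul_sum]
      have hW1 : (∑' k : ℕ, ‖w k‖ * r ^ k) ≤ 1 := by
        have hsplitW : (∑' k : ℕ, ‖w k‖ * r ^ k)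
            = ‖w 0‖ + ∑' k : ℕ, ‖w (k + 1)‖ * r ^ (k + 1) := by
          rw [Summable.tsum_eq_zero_add hWsum]
          simp
        have hc1 : ‖w 0‖ ≤ 1 := by
          rw [← hw.zero_coeff]
          exact hwbd 0 (by norm_num)
        have hc0 : (0:ℝ) ≤ ‖w 0‖ := norm_nonneg _
        have htail := tail_le hw hwbd hr0 hr1
        rw [hsplitW]
        have h1mc : (0:ℝ) ≤ 1 - ‖w 0‖ ^ 2 := by nlinarith
        calc ‖w 0‖ + ∑' k : ℕ, ‖w (k + 1)‖ * r ^ (k + 1)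
            ≤ ‖w 0‖ + (1 - ‖w 0‖ ^ 2) * (r / (1 - r)) := by linarith
          _ ≤ ‖w 0‖ + (1 - ‖w 0‖ ^ 2) * (1 / 4) := by nlinarith
          _ ≤ 1 := by nlinarith [sq_nonneg (1 - ‖w 0‖)]
      calc ∑' k : ℕ, ‖b (k + 1)‖ * r ^ (k + 1)
          ≤ ∑' n : ℕ, ∑ k ∈ range (n + 1),
            (‖w k‖ * r ^ k) * (‖a ((n - k) + 1)‖ * r ^ ((n - k) + 1)) :=
            Summable.tsum_le_tsum hterm hsb hRHS
        _ = (∑' k : ℕ, ‖w k‖ * r ^ k) * ∑' k : ℕ, ‖a (k + 1)‖ * r ^ (k + 1) :=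
            (Summable.tsum_mul_tsum_eq_tsum_sum_range
              (f := fun k => ‖w k‖ * r ^ k) (g := fun m => ‖a (m + 1)‖ * r ^ (m + 1))
              hWsum hsa hfg).symm
        _ ≤ 1 * ∑' k : ℕ, ‖a (k + 1)‖ * r ^ (k + 1) :=
            mul_le_mul_of_nonneg_right hW1 hAnn
        _ = _ := one_mul _
  -- final assembly
  have hsplit : ∑' k : ℕ, (‖a (k + 1)‖ + ‖b (k + 1)‖) * r ^ (k + 1)
      = (∑' k : ℕ, ‖a (k + 1)‖ * r ^ (k + 1)) + ∑' k : ℕ, ‖b (k + 1)‖ * r ^ (k + 1) := by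
    rw [← Summable.tsum_add hsa hsb]
    refine tsum_congr fun k => ?_
    ring
  rw [hsplit]
  nlinarith [sq_nonneg (1 - ‖a 0‖), tail_le ha hh1 hr0 hr1]




theorem part2 (ρ : ℝ) (hρ1 : 1 / 5 < ρ) (hρ2 : ρ < 1) :
    ∃ (h g : ℂ → ℂ) (a b : ℕ → ℂ),
      (∀ z : ℂ, ‖z‖ < 1 → HasSum (fun k : ℕ => a k * z ^ k) (h z)) ∧
      (∀ z : ℂ, ‖z‖ < 1 → HasSum (fun k : ℕ => b k * z ^ k) (g z)) ∧
      b 0 = 0 ∧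
      (∀ z : ℂ, ‖z‖ < 1 → ‖h z‖ ≤ 1) ∧
      (∀ z : ℂ, ‖z‖ < 1 → ‖deriv g z‖ ≤ ‖deriv h z‖) ∧
      1 < ‖a 0‖ + ∑' k : ℕ, (‖a (k + 1)‖ + ‖b (k + 1)‖) * ρ ^ (k + 1) := by
  have hρ0 : 0 < ρ := lt_trans (by norm_num) hρ1
  obtain ⟨α, hα0, hα1, hkey⟩ : ∃ α : ℝ, 0 < α ∧ α < 1 ∧ 1 < ρ * (2 + 3 * α) := by
    set t : ℝ := (1 / ρ - 2) / 3 with ht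
    have ht1 : t < 1 := by
      rw [ht]
      have : 1 / ρ < 5 := by
        rw [div_lt_iff₀ hρ0]
        linarith [mul_lt_mul_of_pos_left hρ1 (by norm_num : (0:ℝ) < 5)]
      linarith
    refine ⟨(max t 0 + 1) / 2, ?_, ?_, ?_⟩
    · have : (0:ℝ) ≤ max t 0 := le_max_right _ _
      linarith
    · have : max t 0 < 1 := max_lt ht1 one_pos
      linarith
    · have hαt : t < (max t 0 + 1) / 2 := by
        have h1 : t ≤ max t 0 := le_max_left _ _
        have h2 : max t 0 < 1 := max_lt ht1 one_pos
        linarith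
      have h3 : 1 / ρ < 2 + 3 * ((max t 0 + 1) / 2) := by
        rw [ht] at hαt
        linarith
      calc 1 = ρ * (1 / ρ) := by field_simp
        _ < _ := mul_lt_mul_of_pos_left h3 hρ0
  set A : ℕ → ℂ := fun k => match k with
    | 0 => (α : ℂ)
    | (n + 1) => -((1 - α ^ 2 : ℝ) : ℂ) * (α : ℂ) ^ n with hA
  set B : ℕ → ℂ := fun k => match k with
    | 0 => (0 : ℂ)
    | (n + 1) => -((1 - α ^ 2 : ℝ) : ℂ) * (α : ℂ) ^ n with hB
  have hAval : ∀ k : ℕ, A (k + 1) = -((1 - α ^ 2 : ℝ) : ℂ) * (α : ℂ) ^ k := fun k => rfl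
  have hBval : ∀ k : ℕ, B (k + 1) = -((1 - α ^ 2 : ℝ) : ℂ) * (α : ℂ) ^ k := fun k => rfl
  have hA0 : A 0 = (α : ℂ) := rfl
  have hB0 : B 0 = 0 := rfl
  set h : ℂ → ℂ := fun z => ((α : ℂ) - z) / (1 - (α : ℂ) * z) with hh
  set g : ℂ → ℂ := fun z => h z - (α : ℂ) with hg
  have hne : ∀ z : ℂ, ‖z‖ < 1 → (1 : ℂ) - (α : ℂ) * z ≠ 0 := by
    intro z hz he
    have h2 : (1:ℝ) = ‖(α : ℂ) * z‖ := by
      rw [sub_eq_zero] at he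
      rw [← he]; simp
    rw [norm_mul, Complex.norm_real, Real.norm_eq_abs, abs_of_pos hα0] at h2
    nlinarith [norm_nonneg z]
  have htail : ∀ z : ℂ, ‖z‖ < 1 →
      HasSum (fun n : ℕ => A (n + 1) * z ^ (n + 1)) (h z - (α : ℂ)) := by
    intro z hz
    have hnorm : ‖(α : ℂ) * z‖ < 1 := by
      rw [norm_mul, Complex.norm_real, Real.norm_eq_abs, abs_of_pos hα0]
      nlinarith [norm_nonneg z]
    have hgeo := hasSum_geometric_of_norm_lt_one hnorm
    have hmul := hgeo.mul_left (-((1 - α ^ 2 : ℝ) : ℂ) * z)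
    have hval : -((1 - α ^ 2 : ℝ) : ℂ) * z * (1 - (α : ℂ) * z)⁻¹ = h z - (α : ℂ) := by
      rw [hh]
      have hzne := hne z hz
      push_cast
      field_simp
      ring
    rw [hval] at hmul
    refine hmul.congr_fun fun n => ?_
    rw [hAval n, mul_pow]
    ring
  have hsumh : ∀ z : ℂ, ‖z‖ < 1 → HasSum (fun k : ℕ => A k * z ^ k) (h z) := by
    intro z hz
    refine (hasSum_nat_add_iff' 1).mp ?_
    convert htail z hz using 1
    rfl
    rw [Finset.range_one, Finset.sum_singleton, hA0, pow_zero, mul_one]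
  have hsumg : ∀ z : ℂ, ‖z‖ < 1 → HasSum (fun k : ℕ => B k * z ^ k) (g z) := by
    intro z hz
    refine (hasSum_nat_add_iff' 1).mp ?_
    have h2 : HasSum (fun n : ℕ => B (n + 1) * z ^ (n + 1)) (h z - (α : ℂ)) :=
      (htail z hz).congr_fun fun n => by rw [hAval n, hBval n]
    convert h2 using 1
    rfl
    rw [Finset.range_one, Finset.sum_singleton, hB0, zero_mul, sub_zero, hg]
  have hbound : ∀ z : ℂ, ‖z‖ < 1 → ‖h z‖ ≤ 1 := by
    intro z hz
    rw [hh]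
    simp only [norm_div]
    rw [div_le_one_iff]
    left
    refine ⟨norm_pos_iff.mpr (hne z hz), ?_⟩
    have hmb := mobius_norm_le (u := z) (c := (α : ℂ)) hz.le
      (by rw [Complex.norm_real, Real.norm_eq_abs, abs_of_pos hα0]; linarith)
    rw [Complex.conj_ofReal] at hmb
    rw [norm_sub_rev]
    exact hmb
  have hderiv : ∀ z : ℂ, ‖z‖ < 1 → ‖deriv g z‖ ≤ ‖deriv h z‖ := by
    intro z hz
    rw [hg, deriv_sub_const]
  refine ⟨h, g, A, B, hsumh, hsumg, hB0, hbound, hderiv, ?_⟩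
  have h1a2 : (0:ℝ) < 1 - α ^ 2 := by nlinarith
  have hnormA0 : ‖A 0‖ = α := by
    rw [hA0, Complex.norm_real, Real.norm_eq_abs, abs_of_pos hα0]
  have haρ : 0 ≤ α * ρ := by positivity
  have haρ1 : α * ρ < 1 := by nlinarith
  have htermeq : ∀ k : ℕ, (‖A (k + 1)‖ + ‖B (k + 1)‖) * ρ ^ (k + 1)
      = (2 * (1 - α ^ 2) * ρ) * (α * ρ) ^ k := by
    intro k
    have hA' : ‖A (k + 1)‖ = (1 - α ^ 2) * α ^ k := by
      rw [hAval k, norm_mul, norm_neg, norm_pow, Complex.norm_real, Complex.norm_real,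
        Real.norm_eq_abs, Real.norm_eq_abs, abs_of_pos hα0, abs_of_pos h1a2]
    have hB' : ‖B (k + 1)‖ = (1 - α ^ 2) * α ^ k := by
      rw [hBval k, norm_mul, norm_neg, norm_pow, Complex.norm_real, Complex.norm_real,
        Real.norm_eq_abs, Real.norm_eq_abs, abs_of_pos hα0, abs_of_pos h1a2]
    rw [hA']
    rw [mul_pow, pow_succ]
    ring
  have hsum : ∑' k : ℕ, (‖A (k + 1)‖ + ‖B (k + 1)‖) * ρ ^ (k + 1)
      = (2 * (1 - α ^ 2) * ρ) * (1 - α * ρ)⁻¹ := by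
    rw [tsum_congr htermeq, tsum_mul_left, tsum_geometric_of_lt_one haρ haρ1]
  rw [hnormA0, hsum]
  have hD : 0 < 1 - α * ρ := by linarith
  rw [show (2 * (1 - α ^ 2) * ρ) * (1 - α * ρ)⁻¹ = (2 * (1 - α ^ 2) * ρ) / (1 - α * ρ) from
    (div_eq_mul_inv _ _).symm]
  rw [show ((1:ℝ) < α + 2 * (1 - α ^ 2) * ρ / (1 - α * ρ))
      ↔ (1 - α < 2 * (1 - α ^ 2) * ρ / (1 - α * ρ)) from ⟨fun hx => by linarith,
      fun hx => by linarith⟩]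
  rw [lt_div_iff₀ hD]
  nlinarith [hkey, hα1, hα0, hD]

end Bohr12
end

/-- Bohr radius for harmonic mappings with bounded analytic part: if `|h| ≤ 1` and
`|g'| ≤ |h'|` on the disk, then for `0 ≤ r ≤ 1/5`,
`|a₀| + ∑_{k≥1}(|a_k|+|b_k|) r^k ≤ 1`, and the radius `1/5` is sharp. -/
theorem stmt_12 :
    (∀ (h g : ℂ → ℂ) (a b : ℕ → ℂ),
      (∀ z : ℂ, ‖z‖ < 1 → HasSum (fun k : ℕ => a k * z ^ k) (h z)) →
      (∀ z : ℂ, ‖z‖ < 1 → HasSum (fun k : ℕ => b k * z ^ k) (g z)) →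
      b 0 = 0 →
      (∀ z : ℂ, ‖z‖ < 1 → ‖h z‖ ≤ 1) →
      (∀ z : ℂ, ‖z‖ < 1 → ‖deriv g z‖ ≤ ‖deriv h z‖) →
      ∀ r : ℝ, 0 ≤ r → r ≤ 1 / 5 →
        ‖a 0‖ + ∑' k : ℕ, (‖a (k + 1)‖ + ‖b (k + 1)‖) * r ^ (k + 1) ≤ 1) ∧
    (∀ ρ : ℝ, 1 / 5 < ρ → ρ < 1 →
      ∃ (h g : ℂ → ℂ) (a b : ℕ → ℂ),
        (∀ z : ℂ, ‖z‖ < 1 → HasSum (fun k : ℕ => a k * z ^ k) (h z)) ∧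
        (∀ z : ℂ, ‖z‖ < 1 → HasSum (fun k : ℕ => b k * z ^ k) (g z)) ∧
        b 0 = 0 ∧
        (∀ z : ℂ, ‖z‖ < 1 → ‖h z‖ ≤ 1) ∧
        (∀ z : ℂ, ‖z‖ < 1 → ‖deriv g z‖ ≤ ‖deriv h z‖) ∧
        1 < ‖a 0‖ + ∑' k : ℕ, (‖a (k + 1)‖ + ‖b (k + 1)‖) * ρ ^ (k + 1)) := by
  constructor
  · intro h g a b ha hb hb0 hh1 hd r hr0 hr5
    exact Bohr12.part1 h g a b ha hb hb0 hh1 hd r hr0 hr5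
  · intro ρ h1 h2
    exact Bohr12.part2 ρ h1 h2
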